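/- Let s>0, λ_L>0, y>0, and ξ_0,ξ_1∈ℕ_0. Set T_L = 1/λ_L, d(y,m)=y^m Γ(2s)/Γ(2s+m), and for 1≤k≤n, φ_s(k,n) = (1/k)·Γ(n+1)Γ(n-k+2s)/(Γ(n-k+1)Γ(n+2s)). Then T_L^{ξ_0} · ( ∫_0^{y}(dα/α)(1-α/y)^{2s-1}[d(y-α,ξ_1)-d(y,ξ_1)] + ∫_0^∞ (dα/α) e^{-λ_L α}[d(y+α,ξ_1)-d(y,ξ_1)] ) = Σ_{k=1}^{ξ_1} φ_s(k,ξ_1) [ T_L^{ξ_0+k} d(y,ξ_1-k) − T_L^{ξ_0} d(y,ξ_1) ]. -/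

import Mathlib

open MeasureTheory Real

noncomputable section

namespace HeatModel

/-- Single-site duality function `d(y,m) = y^m Γ(2s)/Γ(2s+m)`. -/
def dFun (s : ℝ) (y : ℝ) (m : ℕ) : ℝ := y ^ m * Real.Gamma (2 * s) / Real.Gamma (2 * s + m)

/-- The jump rates `φ_s(k,n)` of the harmonic dual process. -/
def phi (s : ℝ) (k n : ℕ) : ℝ :=
  if 1 ≤ k ∧ k ≤ n then
    (1 / (k : ℝ)) * (Real.Gamma ((n : ℝ) + 1) * Real.Gamma ((n : ℝ) - (k : ℝ) + 2 * s)) /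
      (Real.Gamma ((n : ℝ) - (k : ℝ) + 1) * Real.Gamma ((n : ℝ) + 2 * s))
  else 0

lemma int_congr {f g : ℝ → ℝ} {S : Set ℝ} (hs : MeasurableSet S)
    (h : Integrable f (volume.restrict S)) (hfg : ∀ x ∈ S, f x = g x) : IntegrableOn g S :=
  MeasureTheory.IntegrableOn.congr_fun h hfg hs

lemma integrableOn_beta {u v : ℝ} (hu : 0 < u) (hv : 0 < v) :
    IntegrableOn (fun t : ℝ => t ^ (u - 1) * (1 - t) ^ (v - 1)) (Set.Ioo 0 1) := by
  have h := (Complex.betaIntegral_convergent (u := u) (v := v) (by simpa) (by simpa)).1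
  have h2 := (h.mono_set Set.Ioo_subset_Ioc_self).re
  have h2' : IntegrableOn (fun x : ℝ => ((x:ℂ) ^ ((u:ℂ)-1) * ((1:ℂ)-(x:ℂ)) ^ ((v:ℂ)-1)).re)
      (Set.Ioo 0 1) := h2
  refine h2'.congr_fun (fun t ht => ?_) measurableSet_Ioo
  have h1 : (0:ℝ) ≤ t := ht.1.le
  have h3 : (0:ℝ) ≤ 1 - t := by linarith [ht.2]
  simp only [← Complex.ofReal_one, ← Complex.ofReal_sub]
  rw [← Complex.ofReal_cpow h1, ← Complex.ofReal_cpow h3]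
  rw [← Complex.ofReal_mul, Complex.ofReal_re]

lemma beta_eq {u v : ℝ} (hu : 0 < u) (hv : 0 < v) :
    ∫ t in Set.Ioo (0:ℝ) 1, t ^ (u - 1) * (1 - t) ^ (v - 1)
      = Real.Gamma u * Real.Gamma v / Real.Gamma (u + v) := by
  have hG : Real.Gamma (u + v) ≠ 0 := (Real.Gamma_pos_of_pos (by linarith)).ne'
  have hc := Complex.Gamma_mul_Gamma_eq_betaIntegral
    (s := (u:ℂ)) (t := (v:ℂ)) (by simpa) (by simpa)
  have hb : Complex.betaIntegral u v =
      ((∫ t in Set.Ioo (0:ℝ) 1, t ^ (u - 1) * (1 - t) ^ (v - 1) : ℝ) : ℂ) := by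
    rw [Complex.betaIntegral, intervalIntegral.integral_of_le zero_le_one,
      MeasureTheory.integral_Ioc_eq_integral_Ioo]
    have hcg : ∀ t ∈ Set.Ioo (0:ℝ) 1,
        (t:ℂ) ^ ((u:ℂ) - 1) * ((1:ℂ) - t) ^ ((v:ℂ) - 1)
          = ((t ^ (u - 1) * (1 - t) ^ (v - 1) : ℝ) : ℂ) := by
      intro t ht
      have h1 : (0:ℝ) ≤ t := ht.1.le
      have h3 : (0:ℝ) ≤ 1 - t := by linarith [ht.2]
      rw [Complex.ofReal_mul, Complex.ofReal_cpow h1, Complex.ofReal_cpow h3]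
      push_cast
      ring
    rw [setIntegral_congr_fun measurableSet_Ioo hcg]
    exact integral_ofReal
  rw [hb] at hc
  have := congrArg Complex.re hc
  simp only [← Complex.ofReal_add, Complex.Gamma_ofReal, ← Complex.ofReal_mul,
    Complex.ofReal_re] at this
  field_simp
  linarith [this]

lemma scaled_beta {u v y : ℝ} (hu : 0 < u) (hv : 0 < v) (hy : 0 < y) :
    IntegrableOn (fun a : ℝ => a ^ (u - 1) * (1 - a / y) ^ (v - 1)) (Set.Ioo 0 y) ∧
    ∫ a in Set.Ioo (0:ℝ) y, a ^ (u - 1) * (1 - a / y) ^ (v - 1)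
      = y ^ u * (Real.Gamma u * Real.Gamma v / Real.Gamma (u + v)) := by
  have himg : (fun t : ℝ => y * t) '' Set.Ioo 0 1 = Set.Ioo 0 y := by
    rw [show (fun t : ℝ => y * t) = (y * ·) from rfl, Set.image_mul_left_Ioo hy]
    simp
  have hderiv : ∀ t ∈ Set.Ioo (0:ℝ) 1,
      HasDerivWithinAt (fun t : ℝ => y * t) y (Set.Ioo 0 1) t :=
    fun t _ => ((hasDerivAt_id t).const_mul y).hasDerivWithinAt.congr_deriv (by ring)
  have hinj : Set.InjOn (fun t : ℝ => y * t) (Set.Ioo 0 1) :=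
    fun a _ b _ h => by simpa [hy.ne'] using h
  set f : ℝ → ℝ := fun a => a ^ (u - 1) * (1 - a / y) ^ (v - 1) with hf
  have hcong : ∀ t ∈ Set.Ioo (0:ℝ) 1,
      |y| • f (y * t) = y ^ u * (t ^ (u - 1) * (1 - t) ^ (v - 1)) := by
    intro t ht
    have h1 : (0:ℝ) < t := ht.1
    rw [hf, abs_of_pos hy]
    simp only [smul_eq_mul]
    rw [mul_div_cancel_left₀ _ hy.ne', Real.mul_rpow hy.le h1.le]
    have : y * (y ^ (u-1) * t ^ (u-1)) = y ^ u * t ^ (u-1) := by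
      rw [← mul_assoc, ← Real.rpow_one_add' hy.le (by intro h; apply hu.ne'; linarith)]
      norm_num
    rw [show y * ((y ^ (u-1) * t ^ (u-1)) * (1 - t) ^ (v-1))
        = (y * (y ^ (u-1) * t ^ (u-1))) * (1 - t) ^ (v-1) by ring, this]
    ring
  constructor
  · have h1 := (integrableOn_image_iff_integrableOn_abs_deriv_smul
      measurableSet_Ioo hderiv hinj f)
    rw [himg] at h1
    rw [hf] at h1 ⊢
    rw [h1]
    exact int_congr measurableSet_Ioo ((integrableOn_beta hu hv).const_mul (y ^ u))
      (fun t ht => (hcong t ht).symm)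
  · have h1 := integral_image_eq_integral_abs_deriv_smul
      measurableSet_Ioo hderiv hinj f
    rw [himg] at h1
    rw [h1, setIntegral_congr_fun measurableSet_Ioo hcong,
      MeasureTheory.integral_const_mul, beta_eq hu hv]

lemma gamma_tail {r : ℝ} (hr : 0 < r) {k : ℕ} (hk : 1 ≤ k) :
    IntegrableOn (fun a : ℝ => a ^ (k - 1) * Real.exp (-(r * a))) (Set.Ioi 0) ∧
    ∫ a in Set.Ioi (0:ℝ), a ^ (k - 1) * Real.exp (-(r * a))
      = (1 / r) ^ k * Real.Gamma k := by
  have hkr : (0:ℝ) < (k:ℝ) := by exact_mod_cast hk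
  have hcast : ((k:ℝ) - 1) = ((k - 1 : ℕ) : ℝ) := by
    have := Nat.cast_sub hk (R := ℝ); simp at this; linarith [this]
  have hcong : ∀ a ∈ Set.Ioi (0:ℝ),
      a ^ ((k:ℝ) - 1) * Real.exp (-(r * a)) = a ^ (k - 1 : ℕ) * Real.exp (-(r * a)) := by
    intro a ha
    rw [hcast, Real.rpow_natCast]
  constructor
  · have h0 := Real.GammaIntegral_convergent (s := (k:ℝ)) hkr
    have h1 := (integrableOn_Ioi_comp_mul_left_iff
      (fun x : ℝ => Real.exp (-x) * x ^ ((k:ℝ) - 1)) 0 hr).mpr (by simpa using h0)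
    have h2 := (h1.const_mul ((r : ℝ) ^ ((k:ℝ) - 1))⁻¹)
    refine int_congr measurableSet_Ioi h2 (fun a ha => ?_)
    have ha' : (0:ℝ) < a := ha
    rw [Real.mul_rpow hr.le ha'.le]
    field_simp
    simp only [hcast, Real.rpow_natCast]
  · rw [setIntegral_congr_fun measurableSet_Ioi (fun a ha => (hcong a ha).symm),
      Real.integral_rpow_mul_exp_neg_mul_Ioi hkr hr, Real.rpow_natCast]

lemma binom_tail (x z : ℝ) (n : ℕ) :
    (z + x) ^ n - z ^ n
      = ∑ k ∈ Finset.Icc 1 n, (n.choose k : ℝ) * x ^ k * z ^ (n - k) := by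
  rw [add_comm z x, add_pow]
  rw [Finset.sum_range_succ']
  have h0 : x ^ 0 * z ^ (n - 0) * (n.choose 0 : ℝ) = z ^ n := by simp
  rw [h0]
  rw [← Finset.Ico_add_one_right_eq_Icc, Finset.sum_Ico_eq_sum_range, add_sub_cancel_right]
  refine Finset.sum_congr rfl (fun i _ => ?_)
  rw [add_comm 1 i]
  ring

lemma rpow_pred {t : ℝ} (ht : 0 < t) {k : ℕ} (hk : 1 ≤ k) :
    t ^ ((k:ℝ) - 1) = t ^ k * t⁻¹ := by
  have h1 : ((k:ℝ) - 1) = ((k - 1 : ℕ) : ℝ) := by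
    have := Nat.cast_sub hk (R := ℝ); simp at this; linarith
  rw [h1, Real.rpow_natCast]
  have h2 : t ^ (k - 1 : ℕ) * t = t ^ k := by
    rw [← pow_succ]; congr 1; omega
  field_simp [← h2]
  exact h2

lemma pow_pred {t : ℝ} (ht : t ≠ 0) {k : ℕ} (hk : 1 ≤ k) :
    t ^ (k - 1 : ℕ) = t ^ k * t⁻¹ := by
  have h2 : t ^ (k - 1 : ℕ) * t = t ^ k := by
    rw [← pow_succ]; congr 1; omega
  field_simp [← h2]
  exact h2

lemma key_sum (n : ℕ) {v : ℝ} (hv : 0 < v) :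
    ∑ k ∈ Finset.Icc 1 n, (-1:ℝ) ^ (k+1) * (n.choose k : ℝ) *
        (Real.Gamma k * Real.Gamma v / Real.Gamma ((k:ℝ) + v))
    = ∑ k ∈ Finset.Icc 1 n, (n.choose k : ℝ) *
        (Real.Gamma k * Real.Gamma (((n - k : ℕ) : ℝ) + v) / Real.Gamma ((n:ℝ) + v)) := by
  have hkpos : ∀ k ∈ Finset.Icc 1 n, (0:ℝ) < (k:ℝ) := by
    intro k hk
    exact_mod_cast (Finset.mem_Icc.mp hk).1
  have e1 : ∑ k ∈ Finset.Icc 1 n, (-1:ℝ) ^ (k+1) * (n.choose k : ℝ) *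
        (Real.Gamma k * Real.Gamma v / Real.Gamma ((k:ℝ) + v))
      = ∫ t in Set.Ioo (0:ℝ) 1, ∑ k ∈ Finset.Icc 1 n,
          (-1:ℝ) ^ (k+1) * (n.choose k : ℝ) * (t ^ ((k:ℝ) - 1) * (1 - t) ^ (v - 1)) := by
    rw [MeasureTheory.integral_finset_sum _
      (fun k hk => (integrableOn_beta (hkpos k hk) hv).const_mul _)]
    refine Finset.sum_congr rfl fun k hk => ?_
    rw [MeasureTheory.integral_const_mul, beta_eq (hkpos k hk) hv]
  have e2 : ∑ k ∈ Finset.Icc 1 n, (n.choose k : ℝ) *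
        (Real.Gamma k * Real.Gamma (((n - k : ℕ) : ℝ) + v) / Real.Gamma ((n:ℝ) + v))
      = ∫ t in Set.Ioo (0:ℝ) 1, ∑ k ∈ Finset.Icc 1 n,
          (n.choose k : ℝ) * (t ^ ((k:ℝ) - 1) * (1 - t) ^ ((((n - k : ℕ) : ℝ) + v) - 1)) := by
    rw [MeasureTheory.integral_finset_sum _
      (fun k hk => (integrableOn_beta (hkpos k hk) (by positivity)).const_mul _)]
    refine Finset.sum_congr rfl fun k hk => ?_
    have hkn : k ≤ n := (Finset.mem_Icc.mp hk).2
    rw [MeasureTheory.integral_const_mul, beta_eq (hkpos k hk) (by positivity)]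
    congr 2
    rw [Nat.cast_sub hkn]
    ring
  rw [e1, e2]
  refine setIntegral_congr_fun measurableSet_Ioo (fun t ht => ?_)
  have ht0 : (0:ℝ) < t := ht.1
  have ht1 : (0:ℝ) < 1 - t := by linarith [ht.2]
  have hL : ∑ k ∈ Finset.Icc 1 n,
        (-1:ℝ) ^ (k+1) * (n.choose k : ℝ) * (t ^ ((k:ℝ) - 1) * (1 - t) ^ (v - 1))
      = -((1 + -t) ^ n - 1 ^ n) * (t⁻¹ * (1 - t) ^ (v - 1)) := by
    rw [binom_tail (-t) 1 n, ← Finset.sum_neg_distrib, Finset.sum_mul]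
    refine Finset.sum_congr rfl fun k hk => ?_
    have hk1 : 1 ≤ k := (Finset.mem_Icc.mp hk).1
    rw [rpow_pred ht0 hk1]
    rw [neg_pow]
    ring
  have hR : ∑ k ∈ Finset.Icc 1 n,
        (n.choose k : ℝ) * (t ^ ((k:ℝ) - 1) * (1 - t) ^ ((((n - k : ℕ) : ℝ) + v) - 1))
      = (((1 - t) + t) ^ n - (1 - t) ^ n) * (t⁻¹ * (1 - t) ^ (v - 1)) := by
    rw [binom_tail t (1 - t) n, Finset.sum_mul]
    refine Finset.sum_congr rfl fun k hk => ?_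
    have hk1 : 1 ≤ k := (Finset.mem_Icc.mp hk).1
    rw [rpow_pred ht0 hk1,
      show (((n - k : ℕ) : ℝ) + v) - 1 = ((n - k : ℕ) : ℝ) + (v - 1) by ring,
      Real.rpow_add ht1, Real.rpow_natCast]
    ring
  rw [hL, hR]
  ring

lemma phi_eq {s : ℝ} (hs : 0 < s) {k n : ℕ} (hk : 1 ≤ k) (hkn : k ≤ n) :
    phi s k n = (n.choose k : ℝ) *
      (Real.Gamma (k:ℝ) * Real.Gamma (((n - k : ℕ) : ℝ) + 2 * s) / Real.Gamma ((n:ℝ) + 2 * s)) := by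
  rw [phi, if_pos ⟨hk, hkn⟩]
  have hc1 : (n:ℝ) - (k:ℝ) + 2 * s = ((n - k : ℕ) : ℝ) + 2 * s := by
    rw [Nat.cast_sub hkn]
  have hc2 : (n:ℝ) - (k:ℝ) + 1 = ((n - k : ℕ) : ℝ) + 1 := by
    rw [Nat.cast_sub hkn]
  rw [hc1, hc2, Real.Gamma_nat_eq_factorial, Real.Gamma_nat_eq_factorial]
  have hgk : Real.Gamma (k:ℝ) = ((k - 1).factorial : ℝ) := by
    rw [show (k:ℝ) = (((k - 1 : ℕ)):ℝ) + 1 by rw [Nat.cast_sub hk]; push_cast; ring,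
      Real.Gamma_nat_eq_factorial]
  rw [hgk]
  have hfact2 : (n.factorial : ℝ)
      = (n.choose k : ℝ) * (k:ℝ) * ((k - 1).factorial : ℝ) * ((n - k).factorial : ℝ) := by
    have h1 := Nat.choose_mul_factorial_mul_factorial hkn
    have h2 : k.factorial = k * (k - 1).factorial := by
      conv_lhs => rw [show k = (k - 1) + 1 by omega]
      rw [Nat.factorial_succ]
      congr 1
      omega
    rw [← h1, h2]
    push_cast
    ring
  rw [hfact2]
  have hk0 : (k:ℝ) ≠ 0 := by positivity
  have hG1 : Real.Gamma ((n:ℝ) + 2 * s) ≠ 0 := by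
    refine (Real.Gamma_pos_of_pos ?_).ne'
    have : (0:ℝ) ≤ (n:ℝ) := Nat.cast_nonneg n
    linarith
  have hf1 : ((n - k).factorial : ℝ) ≠ 0 := by positivity
  field_simp

/-- Left boundary duality: the reservoir generator acting on the continuous variable of
the duality function `T_L^{ξ₀} d(y,ξ₁)` equals the absorbing dual generator which moves
`k` dual particles from site `1` to the absorbing site `0` at rate `φ_s(k,ξ₁)`. -/
theorem boundary_duality (s lamL : ℝ) (hs : 0 < s) (hL : 0 < lamL)
    (y : ℝ) (hy : 0 < y) (ξ₀ ξ₁ : ℕ) :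
    (1 / lamL) ^ ξ₀ *
        ((∫ a in Set.Ioo 0 y,
            (1 - a / y) ^ (2 * s - 1) / a * (dFun s (y - a) ξ₁ - dFun s y ξ₁))
          + ∫ a in Set.Ioi (0 : ℝ),
              Real.exp (-(lamL * a)) / a * (dFun s (y + a) ξ₁ - dFun s y ξ₁))
    = ∑ k ∈ Finset.Icc 1 ξ₁,
        phi s k ξ₁ *
          ((1 / lamL) ^ (ξ₀ + k) * dFun s y (ξ₁ - k) - (1 / lamL) ^ ξ₀ * dFun s y ξ₁) := by
  set n := ξ₁ with hn
  have h2s : (0:ℝ) < 2 * s := by linarith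
  have hkcast : ∀ k ∈ Finset.Icc 1 n, (0:ℝ) < (k:ℝ) := fun k hk => by
    exact_mod_cast (Finset.mem_Icc.mp hk).1
  -- Evaluate the first integral
  have hI1 : (∫ a in Set.Ioo 0 y,
        (1 - a / y) ^ (2 * s - 1) / a * (dFun s (y - a) n - dFun s y n))
      = ∑ k ∈ Finset.Icc 1 n, ((-1:ℝ)^k * (n.choose k : ℝ) *
          (Real.Gamma (k:ℝ) * Real.Gamma (2*s) / Real.Gamma ((k:ℝ) + 2*s))) * dFun s y n := by
    have hptw : ∀ a ∈ Set.Ioo (0:ℝ) y,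
        (1 - a / y) ^ (2 * s - 1) / a * (dFun s (y - a) n - dFun s y n)
          = ∑ k ∈ Finset.Icc 1 n,
              ((n.choose k : ℝ) * (-1:ℝ)^k * y^(n-k) * (Real.Gamma (2*s) / Real.Gamma (2*s + n)))
                * (a ^ ((k:ℝ) - 1) * (1 - a / y) ^ (2*s - 1)) := by
      intro a ha
      have ha0 : (0:ℝ) < a := ha.1
      have hd : dFun s (y - a) n - dFun s y n
          = (∑ k ∈ Finset.Icc 1 n, (n.choose k : ℝ) * (-a)^k * y^(n-k))
              * Real.Gamma (2*s) / Real.Gamma (2*s + n) := by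
        simp only [dFun]
        rw [div_sub_div_same, ← sub_mul, show (y : ℝ) - a = y + -a from by ring,
          binom_tail]
      rw [hd, Finset.sum_mul, Finset.sum_div, Finset.mul_sum]
      refine Finset.sum_congr rfl fun k hk => ?_
      have hk1 : 1 ≤ k := (Finset.mem_Icc.mp hk).1
      rw [rpow_pred ha0 hk1, neg_pow]
      ring
    rw [setIntegral_congr_fun measurableSet_Ioo hptw,
      MeasureTheory.integral_finset_sum _
        (fun k hk => ((scaled_beta (hkcast k hk) h2s hy).1).const_mul _)]
    refine Finset.sum_congr rfl fun k hk => ?_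
    have hkn : k ≤ n := (Finset.mem_Icc.mp hk).2
    rw [MeasureTheory.integral_const_mul, (scaled_beta (hkcast k hk) h2s hy).2,
      Real.rpow_natCast]
    have hyy : y^(n-k) * y^k = y^n := by rw [← pow_add, Nat.sub_add_cancel hkn]
    rw [dFun, ← hyy]
    ring
  -- Evaluate the second integral
  have hI2 : (∫ a in Set.Ioi (0:ℝ),
        Real.exp (-(lamL * a)) / a * (dFun s (y + a) n - dFun s y n))
      = ∑ k ∈ Finset.Icc 1 n, ((n.choose k : ℝ) * y^(n-k) *
          (Real.Gamma (2*s) / Real.Gamma (2*s + n))) * ((1/lamL)^k * Real.Gamma (k:ℝ)) := by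
    have hptw : ∀ a ∈ Set.Ioi (0:ℝ),
        Real.exp (-(lamL * a)) / a * (dFun s (y + a) n - dFun s y n)
          = ∑ k ∈ Finset.Icc 1 n,
              ((n.choose k : ℝ) * y^(n-k) * (Real.Gamma (2*s) / Real.Gamma (2*s + n)))
                * (a ^ (k - 1 : ℕ) * Real.exp (-(lamL * a))) := by
      intro a ha
      have ha0 : (0:ℝ) < a := ha
      have hd : dFun s (y + a) n - dFun s y n
          = (∑ k ∈ Finset.Icc 1 n, (n.choose k : ℝ) * a^k * y^(n-k))
              * Real.Gamma (2*s) / Real.Gamma (2*s + n) := by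
        simp only [dFun]
        rw [div_sub_div_same, ← sub_mul, binom_tail]
      rw [hd, Finset.sum_mul, Finset.sum_div, Finset.mul_sum]
      refine Finset.sum_congr rfl fun k hk => ?_
      have hk1 : 1 ≤ k := (Finset.mem_Icc.mp hk).1
      rw [pow_pred ha0.ne' hk1]
      ring
    rw [setIntegral_congr_fun measurableSet_Ioi hptw,
      MeasureTheory.integral_finset_sum _
        (fun k hk => ((gamma_tail hL (Finset.mem_Icc.mp hk).1).1).const_mul _)]
    refine Finset.sum_congr rfl fun k hk => ?_
    rw [MeasureTheory.integral_const_mul, (gamma_tail hL (Finset.mem_Icc.mp hk).1).2]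
  rw [hI1, hI2]
  -- Reorganize the RHS
  have hRHS : ∑ k ∈ Finset.Icc 1 n,
        phi s k n * ((1 / lamL) ^ (ξ₀ + k) * dFun s y (n - k) - (1 / lamL) ^ ξ₀ * dFun s y n)
      = (1 / lamL) ^ ξ₀ * (∑ k ∈ Finset.Icc 1 n,
          (phi s k n * ((1 / lamL) ^ k * dFun s y (n - k)) - phi s k n * dFun s y n)) := by
    rw [Finset.mul_sum]
    refine Finset.sum_congr rfl fun k hk => ?_
    rw [pow_add]
    ring
  rw [hRHS]
  congr 1
  rw [Finset.sum_sub_distrib]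
  have hterm1 : ∑ k ∈ Finset.Icc 1 n, ((n.choose k : ℝ) * y^(n-k) *
        (Real.Gamma (2*s) / Real.Gamma (2*s + n))) * ((1/lamL)^k * Real.Gamma (k:ℝ))
      = ∑ k ∈ Finset.Icc 1 n, phi s k n * ((1 / lamL) ^ k * dFun s y (n - k)) := by
    refine Finset.sum_congr rfl fun k hk => ?_
    obtain ⟨hk1, hkn⟩ := Finset.mem_Icc.mp hk
    rw [phi_eq hs hk1 hkn, dFun, Nat.cast_sub hkn]
    have hnk0 : (0:ℝ) ≤ (n:ℝ) - (k:ℝ) := by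
      rw [sub_nonneg]; exact_mod_cast hkn
    have hA : Real.Gamma (2 * s + ((n:ℝ) - (k:ℝ))) ≠ 0 :=
      (Real.Gamma_pos_of_pos (by linarith)).ne'
    have hB : Real.Gamma ((n:ℝ) + 2 * s) ≠ 0 := by
      refine (Real.Gamma_pos_of_pos ?_).ne'
      have : (0:ℝ) ≤ (n:ℝ) := Nat.cast_nonneg n
      linarith
    have hC : Real.Gamma (2 * s + (n:ℝ)) ≠ 0 := by
      refine (Real.Gamma_pos_of_pos ?_).ne'
      have : (0:ℝ) ≤ (n:ℝ) := Nat.cast_nonneg n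
      linarith
    rw [show (((n:ℝ) - (k:ℝ)) + 2 * s) = 2 * s + ((n:ℝ) - (k:ℝ)) by ring]
    field_simp [hL.ne']
    ring
  have hterm2 : ∑ k ∈ Finset.Icc 1 n, ((-1:ℝ)^k * (n.choose k : ℝ) *
        (Real.Gamma (k:ℝ) * Real.Gamma (2*s) / Real.Gamma ((k:ℝ) + 2*s))) * dFun s y n
      = -∑ k ∈ Finset.Icc 1 n, phi s k n * dFun s y n := by
    have hphi : ∑ k ∈ Finset.Icc 1 n, phi s k n
        = ∑ k ∈ Finset.Icc 1 n, (n.choose k : ℝ) *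
            (Real.Gamma (k:ℝ) * Real.Gamma (((n - k : ℕ) : ℝ) + 2 * s)
              / Real.Gamma ((n:ℝ) + 2 * s)) :=
      Finset.sum_congr rfl fun k hk =>
        phi_eq hs (Finset.mem_Icc.mp hk).1 (Finset.mem_Icc.mp hk).2
    have hcsum : ∑ k ∈ Finset.Icc 1 n, (-1:ℝ)^k * (n.choose k : ℝ) *
          (Real.Gamma (k:ℝ) * Real.Gamma (2*s) / Real.Gamma ((k:ℝ) + 2*s))
        = -∑ k ∈ Finset.Icc 1 n, (-1:ℝ)^(k+1) * (n.choose k : ℝ) *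
          (Real.Gamma (k:ℝ) * Real.Gamma (2*s) / Real.Gamma ((k:ℝ) + 2*s)) := by
      rw [← Finset.sum_neg_distrib]
      exact Finset.sum_congr rfl fun k _ => by ring
    rw [← Finset.sum_mul, ← Finset.sum_mul, hcsum, key_sum n h2s, ← hphi]
    ring
  rw [hterm1, hterm2]
  ring

end HeatModel
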